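/- Let ℓ: ℝᵈ → ℝ be defined by ℓ(v) = max_{k ≤ K} (aₖᵀv + bₖ) for vectors aₖ ∈ ℝᵈ and scalars bₖ, let λ, θ₁ > 0, and let v̂ ∈ ℝᵈ. Then sup_{v ∈ ℝᵈ} { ℓ(v) − λθ₁‖v − v̂‖² } = max_{k ≤ K} ( aₖᵀv̂ + bₖ + ‖aₖ‖²/(4λθ₁) ), where ‖·‖ is the Euclidean norm. -/

import Mathlib

open Real

/-- Quadratic d-transform of a piecewise linear function:
`sup_v { max_k (aₖᵀv + bₖ) − λθ₁‖v − v̂‖² } = max_k ( aₖᵀv̂ + bₖ + ‖aₖ‖²/(4λθ₁) )`. -/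
theorem quadratic_d_transform_piecewise_linear
    {d K : ℕ} (hK : 0 < K)
    (a : Fin K → EuclideanSpace ℝ (Fin d)) (b : Fin K → ℝ)
    (lam th1 : ℝ) (hlam : 0 < lam) (hth1 : 0 < th1)
    (vhat : EuclideanSpace ℝ (Fin d)) :
    haveI : Nonempty (Fin K) := ⟨⟨0, hK⟩⟩
    (⨆ v : EuclideanSpace ℝ (Fin d),
        ((⨆ k : Fin K, ((inner ℝ (a k) v : ℝ) + b k)) - lam * th1 * ‖v - vhat‖ ^ 2))
      = ⨆ k : Fin K, ((inner ℝ (a k) vhat : ℝ) + b k + ‖a k‖ ^ 2 / (4 * lam * th1)) := by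
  haveI : Nonempty (Fin K) := ⟨⟨0, hK⟩⟩
  set c := lam * th1 with hcdef
  have hc : 0 < c := mul_pos hlam hth1
  have key : ∀ (u w : EuclideanSpace ℝ (Fin d)),
      (inner ℝ u w : ℝ) ≤ c * ‖w‖ ^ 2 + ‖u‖ ^ 2 / (4 * c) := by
    intro u w
    have h0 : (0:ℝ) ≤ ‖w - (1/(2*c)) • u‖ ^ 2 := sq_nonneg _
    have hexp : ‖w - (1/(2*c)) • u‖ ^ 2
        = ‖w‖ ^ 2 - 2 * (inner ℝ w ((1/(2*c)) • u) : ℝ) + ‖(1/(2*c)) • u‖ ^ 2 :=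
      norm_sub_sq_real w _
    have h1 : (inner ℝ w ((1/(2*c)) • u) : ℝ) = (1/(2*c)) * (inner ℝ w u : ℝ) :=
      real_inner_smul_right w u _
    have h2 : ‖(1/(2*c)) • u‖ = (1/(2*c)) * ‖u‖ := by
      rw [norm_smul, Real.norm_eq_abs, abs_of_pos (by positivity)]
    have hcomm : (inner ℝ u w : ℝ) = (inner ℝ w u : ℝ) := real_inner_comm w u
    rw [hexp, h1, h2] at h0
    rw [hcomm]
    have hcne : c ≠ 0 := ne_of_gt hc
    have h0' : 0 ≤ 4*c^2*‖w‖^2 - 4*c*(inner ℝ w u:ℝ) + ‖u‖^2 := by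
      have h := mul_nonneg (by positivity : (0:ℝ) ≤ 4*c^2) h0
      have e : 4*c^2 * (‖w‖^2 - 2*(1/(2*c)*(inner ℝ w u:ℝ)) + (1/(2*c)*‖u‖)^2)
          = 4*c^2*‖w‖^2 - 4*c*(inner ℝ w u:ℝ) + ‖u‖^2 := by field_simp; ring
      linarith [e ▸ h]
    rw [← sub_le_iff_le_add', le_div_iff₀ (by positivity : (0:ℝ) < 4 * c)]
    nlinarith [h0', hc]
  -- the two suprema functions
  set F : EuclideanSpace ℝ (Fin d) → ℝ := fun v =>
    (⨆ k : Fin K, ((inner ℝ (a k) v : ℝ) + b k)) - c * ‖v - vhat‖ ^ 2 with hF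
  have hRform : ∀ k : Fin K, ‖a k‖ ^ 2 / (4 * lam * th1) = ‖a k‖ ^ 2 / (4 * c) := by
    intro k; rw [hcdef]; ring_nf
  set R : ℝ := ⨆ k : Fin K, ((inner ℝ (a k) vhat : ℝ) + b k + ‖a k‖ ^ 2 / (4 * lam * th1)) with hR
  have hbdd : ∀ v, F v ≤ R := by
    intro v
    have : (⨆ k : Fin K, ((inner ℝ (a k) v : ℝ) + b k)) ≤ R + c * ‖v - vhat‖ ^ 2 := by
      apply ciSup_le
      intro k
      have hsplit : (inner ℝ (a k) v : ℝ)
          = (inner ℝ (a k) vhat : ℝ) + (inner ℝ (a k) (v - vhat) : ℝ) := by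
        rw [← inner_add_right]; congr 1; abel
      have h1 := key (a k) (v - vhat)
      have h2 : (inner ℝ (a k) vhat : ℝ) + b k + ‖a k‖ ^ 2 / (4 * lam * th1) ≤ R :=
        le_ciSup (f := fun k : Fin K => ((inner ℝ (a k) vhat : ℝ) + b k + ‖a k‖ ^ 2 / (4 * lam * th1)))
          (Set.Finite.bddAbove (Set.finite_range _)) k
      rw [hRform k] at h2
      linarith [h1, h2, hsplit ▸ le_refl ((inner ℝ (a k) v : ℝ))]
    simpa [hF] using sub_le_iff_le_add.mpr this
  have hFbdd : BddAbove (Set.range F) := ⟨R, by rintro x ⟨v, rfl⟩; exact hbdd v⟩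
  apply le_antisymm
  · exact ciSup_le hbdd
  · apply ciSup_le
    intro k
    set v0 : EuclideanSpace ℝ (Fin d) := vhat + (1/(2*c)) • a k with hv0
    have hval : (inner ℝ (a k) vhat : ℝ) + b k + ‖a k‖ ^ 2 / (4 * lam * th1) ≤ F v0 := by
      have hsub : v0 - vhat = (1/(2*c)) • a k := by rw [hv0]; abel
      have hin : (inner ℝ (a k) v0 : ℝ)
          = (inner ℝ (a k) vhat : ℝ) + (1/(2*c)) * ‖a k‖ ^ 2 := by
        rw [hv0, inner_add_right, real_inner_smul_right, real_inner_self_eq_norm_sq]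
      have hnorm : ‖v0 - vhat‖ ^ 2 = (1/(2*c))^2 * ‖a k‖ ^ 2 := by
        rw [hsub, norm_smul, Real.norm_eq_abs, abs_of_pos (by positivity : (0:ℝ) < 1/(2*c)), mul_pow]
      have hle : (inner ℝ (a k) v0 : ℝ) + b k ≤ ⨆ k' : Fin K, ((inner ℝ (a k') v0 : ℝ) + b k') :=
        le_ciSup (f := fun k' : Fin K => ((inner ℝ (a k') v0 : ℝ) + b k'))
          (Set.Finite.bddAbove (Set.finite_range _)) k
      have heq : (inner ℝ (a k) v0 : ℝ) + b k - c * ‖v0 - vhat‖ ^ 2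
          = (inner ℝ (a k) vhat : ℝ) + b k + ‖a k‖ ^ 2 / (4 * lam * th1) := by
        rw [hin, hnorm, hRform k]
        field_simp
        ring
      calc (inner ℝ (a k) vhat : ℝ) + b k + ‖a k‖ ^ 2 / (4 * lam * th1)
          = (inner ℝ (a k) v0 : ℝ) + b k - c * ‖v0 - vhat‖ ^ 2 := heq.symm
        _ ≤ F v0 := by simp only [hF]; linarith
    exact hval.trans (le_ciSup hFbdd v0)
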